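/- Let m ≥ 2 be an even natural number, let a₁, …, a_m be integers, and suppose either a_i ≥ 1 for all 1 ≤ i ≤ m or a_i ≤ −1 for all 1 ≤ i ≤ m. Define z : ℕ → ℤ by z₀ = 0, z₁ = 1, and z_{n+1} = 2·a_n·z_n + z_{n−1} for 1 ≤ n ≤ m. Then |z_{m+1}| > 2^m · Π_{i=1}^m |a_i|; in particular |z_{m+1}| > 1. -/
import Mathlib

private lemma prodge13 (s : Finset ℕ) (f : ℕ → ℤ) (h : ∀ i ∈ s, 1 ≤ f i) :
    (1 : ℤ) ≤ ∏ i ∈ s, f i := by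
  have := Finset.prod_le_prod (s := s) (f := fun _ => (1 : ℤ)) (g := f)
    (fun i _ => zero_le_one) h
  simpa using this

private lemma key13 (m : ℕ) (a z : ℕ → ℤ) (ha : ∀ i, 1 ≤ i → i ≤ m → 1 ≤ a i)
    (hz0 : z 0 = 0) (hz1 : z 1 = 1)
    (hrec : ∀ n, 1 ≤ n → n ≤ m → z (n + 1) = 2 * a n * z n + z (n - 1)) :
    ∀ k, 1 ≤ k → k ≤ m →
      1 ≤ z k ∧ 2 ^ k * ∏ i ∈ Finset.Icc 1 k, a i ≤ z (k + 1) := by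
  intro k
  induction k with
  | zero => omega
  | succ k ih =>
    intro _ hk
    rcases Nat.eq_zero_or_pos k with hk0 | hk1
    · subst hk0
      have h2 : z 2 = 2 * a 1 * z 1 + z 0 := hrec 1 le_rfl hk
      constructor
      · simp [hz1]
      · simp only [Finset.Icc_self, Finset.prod_singleton]
        have := ha 1 le_rfl hk
        rw [h2, hz0, hz1]
        ring_nf
        linarith [ha 1 le_rfl hk]
    · obtain ⟨hzk, hzk1⟩ := ih hk1 (by omega)
      have hprod : (1 : ℤ) ≤ ∏ i ∈ Finset.Icc 1 k, a i := by
        apply prodge13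
        intro i hi
        rw [Finset.mem_Icc] at hi; exact ha i hi.1 (by omega)
      have hpow : (1 : ℤ) ≤ 2 ^ k := one_le_pow₀ (by norm_num)
      have ha1 : 1 ≤ a (k + 1) := ha (k + 1) (by omega) hk
      have hz1le : 1 ≤ z (k + 1) := le_trans (by nlinarith) hzk1
      refine ⟨hz1le, ?_⟩
      have hr : z (k + 2) = 2 * a (k + 1) * z (k + 1) + z k := by
        have := hrec (k + 1) (by omega) hk
        simpa using this
      rw [Finset.prod_Icc_succ_top (by omega : 1 ≤ k + 1)]
      rw [hr, pow_succ]
      have h2 : 2 ^ k * ∏ i ∈ Finset.Icc 1 k, a i ≤ z (k + 1) := hzk1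
      nlinarith [mul_le_mul_of_nonneg_left h2 (by linarith : (0:ℤ) ≤ 2 * a (k + 1))]

private lemma mainpos13 (m : ℕ) (hm2 : 2 ≤ m) (a z : ℕ → ℤ)
    (ha : ∀ i, 1 ≤ i → i ≤ m → 1 ≤ a i)
    (hz0 : z 0 = 0) (hz1 : z 1 = 1)
    (hrec : ∀ n, 1 ≤ n → n ≤ m → z (n + 1) = 2 * a n * z n + z (n - 1)) :
    2 ^ m * ∏ i ∈ Finset.Icc 1 m, |a i| < |z (m + 1)| := by
  obtain ⟨hzm1, hzm⟩ := key13 m a z ha hz0 hz1 hrec (m - 1) (by omega) (by omega)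
  have hm1 : m - 1 + 1 = m := by omega
  rw [hm1] at hzm
  have ham : 1 ≤ a m := ha m (by omega) le_rfl
  have hr : z (m + 1) = 2 * a m * z m + z (m - 1) := hrec m (by omega) le_rfl
  have hprodpos : (1 : ℤ) ≤ ∏ i ∈ Finset.Icc 1 (m - 1), a i := by
    apply prodge13
    intro i hi
    rw [Finset.mem_Icc] at hi; exact ha i hi.1 (by omega)
  have hpow : (1 : ℤ) ≤ 2 ^ (m - 1) := one_le_pow₀ (by norm_num)
  have habs : ∏ i ∈ Finset.Icc 1 m, |a i| = ∏ i ∈ Finset.Icc 1 m, a i :=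
    Finset.prod_congr rfl fun i hi => by
      rw [Finset.mem_Icc] at hi; exact abs_of_pos (by linarith [ha i hi.1 hi.2])
  have hsplit : ∏ i ∈ Finset.Icc 1 m, a i =
      (∏ i ∈ Finset.Icc 1 (m - 1), a i) * a m := by
    have := Finset.prod_Icc_succ_top (by omega : 1 ≤ m - 1 + 1) a
    rw [hm1] at this
    exact this
  have hpows : (2 : ℤ) ^ m = 2 ^ (m - 1) * 2 := by
    rw [← pow_succ]; congr 1; omega
  have hkey : 2 ^ m * ∏ i ∈ Finset.Icc 1 m, a i < z (m + 1) := by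
    rw [hr, hsplit, hpows]
    nlinarith [mul_le_mul_of_nonneg_left hzm (by linarith : (0:ℤ) ≤ 2 * a m)]
  rw [habs]
  calc 2 ^ m * ∏ i ∈ Finset.Icc 1 m, a i < z (m + 1) := hkey
    _ ≤ |z (m + 1)| := le_abs_self _

/-- If `m ≥ 2` is even and the integers `a₁, …, a_m` are all `≥ 1` or all
`≤ -1`, then the solution of `z_{n+1} = 2a_n z_n + z_{n-1}`, `z₀ = 0`, `z₁ = 1`
satisfies `|z_{m+1}| > 2^m·|a₁|⋯|a_m| > 1`; in particular the corresponding
1-bridge torus knot is nontrivial. -/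
theorem stmt_13 (m : ℕ) (hm2 : 2 ≤ m) (hme : Even m) (a : ℕ → ℤ)
    (ha : (∀ i, 1 ≤ i → i ≤ m → 1 ≤ a i) ∨ (∀ i, 1 ≤ i → i ≤ m → a i ≤ -1))
    (z : ℕ → ℤ) (hz0 : z 0 = 0) (hz1 : z 1 = 1)
    (hrec : ∀ n, 1 ≤ n → n ≤ m → z (n + 1) = 2 * a n * z n + z (n - 1)) :
    2 ^ m * ∏ i ∈ Finset.Icc 1 m, |a i| < |z (m + 1)| ∧ 1 < |z (m + 1)| := by
  have hmain : 2 ^ m * ∏ i ∈ Finset.Icc 1 m, |a i| < |z (m + 1)| := by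
    rcases ha with hpos | hneg
    · exact mainpos13 m hm2 a z hpos hz0 hz1 hrec
    · set b : ℕ → ℤ := fun i => -a i with hb
      set w : ℕ → ℤ := fun n => (-1) ^ (n + 1) * z n with hw
      have hb1 : ∀ i, 1 ≤ i → i ≤ m → 1 ≤ b i := fun i h1 h2 => by
        simp only [hb]; linarith [hneg i h1 h2]
      have hw0 : w 0 = 0 := by simp [hw, hz0]
      have hw1 : w 1 = 1 := by simp [hw, hz1]
      have hwrec : ∀ n, 1 ≤ n → n ≤ m → w (n + 1) = 2 * b n * w n + w (n - 1) := by
        intro n h1 h2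
        obtain ⟨l, rfl⟩ : ∃ l, n = l + 1 := ⟨n - 1, by omega⟩
        simp only [hw, hb, Nat.add_sub_cancel]
        rw [hrec (l + 1) h1 h2]
        simp only [Nat.add_sub_cancel]
        ring
      have := mainpos13 m hm2 b w hb1 hw0 hw1 hwrec
      have habs : ∀ i, |b i| = |a i| := fun i => by simp [hb]
      have hwabs : |w (m + 1)| = |z (m + 1)| := by
        simp [hw, abs_mul]
      rw [hwabs] at this
      calc 2 ^ m * ∏ i ∈ Finset.Icc 1 m, |a i|
          = 2 ^ m * ∏ i ∈ Finset.Icc 1 m, |b i| := by simp [habs]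
        _ < |z (m + 1)| := this
  refine ⟨hmain, ?_⟩
  have hprod : (1 : ℤ) ≤ ∏ i ∈ Finset.Icc 1 m, |a i| := by
    apply prodge13
    intro i hi
    rw [Finset.mem_Icc] at hi
    rcases ha with h | h
    · have := h i hi.1 hi.2
      rw [abs_of_pos (by linarith)]; linarith
    · have := h i hi.1 hi.2
      rw [abs_of_nonpos (by linarith)]; linarith
  have hpow : (1 : ℤ) ≤ 2 ^ m := one_le_pow₀ (by norm_num)
  nlinarith
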